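/- Let X be a finite set with n elements and let S be a subsemilattice of T(X). If S ≠ E_s for every s ∈ X, then |S| < 2^{n-1}, where E_s = {e_A : A ⊆ X \ {s}} and e_A fixes A pointwise and maps all other points to s. -/

import Mathlib

open scoped Classical

def IsSubsemilattice {X : Type*} (S : Set (X → X)) : Prop :=
  S.Nonempty ∧ (∀ e ∈ S, e ∘ e = e) ∧ (∀ e ∈ S, ∀ f ∈ S, e ∘ f = f ∘ e) ∧
    (∀ e ∈ S, ∀ f ∈ S, e ∘ f ∈ S)

noncomputable def eFix {X : Type*} (t : X) (A : Set X) : X → X :=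
  fun x => if x ∈ A then x else t

def Esl {X : Type*} (t : X) : Set (X → X) :=
  {e | ∃ A : Set X, A ⊆ {t}ᶜ ∧ e = @eFix X t A}

theorem card_lt_of_ne_Et {X : Type*} [Fintype X] {n : ℕ}
    (hn : Fintype.card X = n) (hn1 : 1 ≤ n)
    (S : Set (X → X)) (hS : IsSubsemilattice S)
    (hne : ∀ s : X, S ≠ Esl s) :
    S.ncard < 2 ^ (n - 1) := by
  by_contra hlt
  push_neg at hlt
  obtain ⟨hSne, hidem, hcomm, hclosed⟩ := hS
  set F : (X → X) → Set X := fun e => {x | e x = x} with hF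
  -- every value of e is fixed by e
  have hFe : ∀ e ∈ S, ∀ x, e x ∈ F e := by
    intro e he x
    have := congrFun (hidem e he) x
    exact this
  -- fixed set of a composition
  have hinter : ∀ e ∈ S, ∀ f ∈ S, F (e ∘ f) = F e ∩ F f := by
    intro e he f hf
    ext x
    constructor
    · intro hx
      have hx' : e (f x) = x := hx
      have hfx : f x = x := by
        have h1 : f (e (f x)) = f x := congrArg f hx'
        have h2 : f (e (f x)) = e (f (f x)) := congrFun (hcomm f hf e he) (f x)
        have h3 : f (f x) = f x := hFe f hf x
        rw [h2, h3, hx'] at h1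
        exact h1.symm
      have hex : e x = x := by rwa [hfx] at hx'
      exact ⟨hex, hfx⟩
    · rintro ⟨h1, h2⟩
      show e (f x) = x
      rw [show f x = x from h2]; exact h1
  -- F is injective on S
  have hinj : Set.InjOn F S := by
    intro e he f hf hef
    have h1 : e ∘ f = f := by
      funext x
      have : f x ∈ F f := hFe f hf x
      rw [← hef] at this
      exact this
    have h2 : f ∘ e = e := by
      funext x
      have : e x ∈ F e := hFe e he x
      rw [hef] at this
      exact this
    rw [← h1, hcomm e he f hf, h2]
  have hSfin : S.Finite := Set.toFinite S
  -- minimal fixed set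
  obtain ⟨m, hm, hmmin0⟩ := Set.Finite.exists_minimalFor F S hSfin hSne
  have hmmin : ∀ a' ∈ S, F a' ≤ F m → F m = F a' := fun a ha h => le_antisymm (hmmin0 ha h) h
  have hmin : ∀ e ∈ S, F m ⊆ F e := by
    intro e he
    have hcm : e ∘ m ∈ S := hclosed e he m hm
    have h1 : F (e ∘ m) = F e ∩ F m := hinter e he m hm
    have h2 : F (e ∘ m) ⊆ F m := by rw [h1]; exact Set.inter_subset_right
    have h3 := hmmin (e ∘ m) hcm h2
    rw [h3, h1]
    exact Set.inter_subset_left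
  -- pick s in F m
  have hXne : Nonempty X := by
    rw [← Fintype.card_pos_iff, hn]; omega
  obtain ⟨x0⟩ := hXne
  have hs0 : m x0 ∈ F m := hFe m hm x0
  set s : X := m x0 with hsdef
  have hsFix : ∀ e ∈ S, e s = s := fun e he => hmin e he hs0
  -- counting
  set T : Set (Set X) := {A : Set X | s ∈ A} with hT
  have himg : F '' S ⊆ T := by
    rintro _ ⟨e, he, rfl⟩
    exact hsFix e he
  have hcardT : T.ncard = 2 ^ (n - 1) := by
    have e1 : {A : Set X // s ∈ A} ≃ ({x : X // x ≠ s} → Prop) :=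
      { toFun := fun A x => (x : X) ∈ A.1
        invFun := fun f => ⟨{y | y = s ∨ ∃ h : y ≠ s, f ⟨y, h⟩}, Or.inl rfl⟩
        left_inv := by
          rintro ⟨A, hA⟩
          apply Subtype.ext
          ext y
          simp only [Set.mem_setOf_eq]
          constructor
          · rintro (rfl | ⟨h, hy⟩)
            · exact hA
            · exact hy
          · intro hy
            by_cases h : y = s
            · exact Or.inl h
            · exact Or.inr ⟨h, hy⟩
        right_inv := by
          intro f
          funext x
          simp only [Set.mem_setOf_eq, x.2, false_or]
          refine propext ⟨?_, fun h => ⟨x.2, ?_⟩⟩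
          · rintro ⟨h, hf⟩
            convert hf using 2
          · convert h using 2 }
    have h2 : Nat.card {A : Set X // s ∈ A} = 2 ^ (n - 1) := by
      rw [Nat.card_congr e1, Nat.card_eq_fintype_card, Fintype.card_fun,
        Fintype.card_prop]
      congr 1
      have : Fintype.card {x : X // x ≠ s} = Fintype.card X - Fintype.card {x : X // x = s} :=
        Fintype.card_subtype_compl _
      rw [this, Fintype.card_subtype_eq, hn]
    rw [← h2, ← Nat.card_coe_set_eq]
    rfl
  have hSFcard : (F '' S).ncard = S.ncard := Set.ncard_image_of_injOn hinj
  have hle : (F '' S).ncard ≤ T.ncard := Set.ncard_le_ncard himg (Set.toFinite T)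
  have heq : F '' S = T := by
    apply Set.eq_of_subset_of_ncard_le himg
    rw [hSFcard, hcardT]
    exact hlt
  -- every set containing s is a fixed set
  have hall : ∀ A : Set X, s ∈ A → ∃ e ∈ S, F e = A := by
    intro A hA
    have : A ∈ F '' S := heq ▸ hA
    obtain ⟨e, he, hFe'⟩ := this
    exact ⟨e, he, hFe'⟩
  -- dichotomy
  have hdich : ∀ e ∈ S, ∀ x, e x = x ∨ e x = s := by
    intro e he x
    by_cases hx : e x = x
    · exact Or.inl hx
    right
    have hxs : x ≠ s := by
      rintro rfl
      exact hx (hsFix e he)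
    obtain ⟨f, hf, hFf⟩ := hall {s, x} (Set.mem_insert s {x})
    have hfx : f x = x := by
      have : x ∈ F f := by rw [hFf]; exact Set.mem_insert_of_mem s rfl
      exact this
    have : f (e x) = e x := by
      have h1 : f (e x) = e (f x) := congrFun (hcomm f hf e he) x
      rw [h1, hfx]
    have hmem : e x ∈ ({s, x} : Set X) := by rw [← hFf]; exact this
    rcases hmem with h | h
    · exact h
    · exact absurd h hx
  -- S = Esl s
  have hsub : S = Esl s := by
    apply Set.Subset.antisymm
    · intro e he
      refine ⟨F e \ {s}, fun x hx => hx.2, ?_⟩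
      funext x
      by_cases hx : x ∈ F e \ {s}
      · rw [eFix, if_pos hx]
        exact hx.1
      · rw [eFix, if_neg hx]
        by_cases hxs : x = s
        · rw [hxs]; exact hsFix e he
        · have : x ∉ F e := fun h => hx ⟨h, hxs⟩
          rcases hdich e he x with h | h
          · exact absurd h this
          · exact h
    · rintro e ⟨A, hA, rfl⟩
      obtain ⟨f, hf, hFf⟩ := hall (insert s A) (Set.mem_insert s A)
      have : eFix s A = f := by
        funext x
        by_cases hx : x ∈ A
        · rw [eFix, if_pos hx]
          have : x ∈ F f := by rw [hFf]; exact Set.mem_insert_of_mem s hx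
          exact this.symm
        · rw [eFix, if_neg hx]
          by_cases hxs : x = s
          · rw [hxs]; exact (hsFix f hf).symm
          · have : x ∉ F f := by
              rw [hFf]
              rintro (h | h)
              · exact hxs h
              · exact hx h
            rcases hdich f hf x with h | h
            · exact absurd h this
            · exact h.symm
      rw [this]
      exact hf
  exact hne s hsub
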